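/- Let q∈(2,3). For any t∈T with q-expansion (t_i)∈Ω2^ℕ (i.e., t=∑_{i=1}^∞ t_i/q^i with all t_i∈Ω2), the Hausdorff dimension of E∩(E+t) equals (log 3/log q)·d((t_i)). -/

import Mathlib

open scoped Pointwise ENNReal
open Filter MeasureTheory Topology
open scoped NNReal

noncomputable section

/-- The digit set Ω₁ = {(0,0),(0,1),(1,0)} ⊆ ℝ². -/
def Omega1 : Set (ℝ × ℝ) := {((0:ℝ), (0:ℝ)), (0, 1), (1, 0)}

/-- The digit set Ω₂ = Ω₁ − Ω₁ ⊆ ℝ². -/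
def Omega2 : Set (ℝ × ℝ) :=
  {((0:ℝ), (0:ℝ)), (0, 1), (1, 0), (-1, 0), (-1, 1), (0, -1), (1, -1)}

/-- The Sierpinski gasket in base `q`. -/
def gasket (q : ℝ) : Set (ℝ × ℝ) :=
  {x | ∃ c : ℕ → ℝ × ℝ, (∀ i, c i ∈ Omega1) ∧ x = ∑' i, (q ^ (i + 1))⁻¹ • c i}

/-- `U_q`: points of `[-1/(q-1), 1/(q-1)]` having a unique `q`-expansion over `{-1,0,1}`. -/
def uniqSet (q : ℝ) : Set ℝ :=
  {s | s ∈ Set.Icc (-(1 / (q - 1))) (1 / (q - 1)) ∧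
    ∃! t : ℕ → ℝ, (∀ i, t i ∈ ({-1, 0, 1} : Set ℝ)) ∧ s = ∑' i, t i / q ^ (i + 1)}

/-- The set `T`. -/
def Tset (q : ℝ) : Set (ℝ × ℝ) :=
  {t | t ∈ gasket q - gasket q ∧ t.1 ∈ uniqSet q ∧ t.2 ∈ uniqSet q}

/-- The set `D_q` of Hausdorff dimensions of intersections. -/
def Dset (q : ℝ) : Set ℝ≥0∞ :=
  {d | ∃ t ∈ Tset q, d = dimH (gasket q ∩ ((· + t) '' gasket q))}

/-- The words `w_n` over `{0,1,2}`: `klWord 0 = w₁ = 2`,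
`w_{n+1} = (w_n ⟨reflection of w_n⟩)⁺`. -/
def klWord : ℕ → List ℕ
  | 0 => [2]
  | n + 1 =>
    let w := klWord n ++ (klWord n).map (fun x => 2 - x)
    w.dropLast ++ [w.getLast?.getD 0 + 1]

/-- `isKLBase n p`: `p ∈ (2,3)` and `1` has (greedy) expansion `w_n 0^∞` in base `p`
w.r.t. `{0,1,2}`, i.e. `p = q_n`. -/
def isKLBase (n : ℕ) (p : ℝ) : Prop :=
  p ∈ Set.Ioo (2 : ℝ) 3 ∧
    (1 : ℝ) = ∑ i ∈ Finset.range (klWord (n - 1)).length,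
      ((klWord (n - 1)).getD i 0 : ℝ) / p ^ (i + 1)

/-- `1` has a unique expansion in base `p` w.r.t. the digit set `{0,1,2}`. -/
def uniqueOneExp (p : ℝ) : Prop :=
  ∃! c : ℕ → ℕ, (∀ i, c i ≤ 2) ∧ (1 : ℝ) = ∑' i, (c i : ℝ) / p ^ (i + 1)

/-- The Thue–Morse sequence. -/
def tm : ℕ → ℕ
  | 0 => 0
  | n + 1 => if (n + 1) % 2 = 0 then tm ((n + 1) / 2) else 1 - tm ((n + 1) / 2)
decreasing_by all_goals omega

/-- `λ_i = τ_i − τ_{i−1}` (for `i ≥ 1`). -/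
def lam (i : ℕ) : ℤ := (tm i : ℤ) - (tm (i - 1) : ℤ)

/-- The word `ε_n = λ₁ ⋯ λ_{2^n}`. -/
def eps (n : ℕ) : List ℤ := (List.range (2 ^ n)).map fun i => lam (i + 1)

/-- Reflection of a word over `{-1,0,1}`: each digit `x` is replaced by `-x`. -/
def reflect (w : List ℤ) : List ℤ := w.map fun x => -x

/-- `w⁺`: the last digit is increased by `1`. -/
def plusOne (w : List ℤ) : List ℤ := w.dropLast ++ [w.getLast?.getD 0 + 1]

/-- `w⁻`: the last digit is decreased by `1`. -/
def minusOne (w : List ℤ) : List ℤ := w.dropLast ++ [w.getLast?.getD 0 - 1]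

/-- The periodic sequence `w^∞` (the `(j+1)`-st term is `per w j`). -/
def per (w : List ℤ) : ℕ → ℤ := fun j => w.getD (j % w.length) 0

/-- `EndsWith x s`: the sequence `x` ends with (has tail) the sequence `s`. -/
def EndsWith {α : Type*} (x s : ℕ → α) : Prop := ∃ k, ∀ j, x (j + k) = s j

/-- The digit set Ω₂ as a subset of ℤ × ℤ. -/
def Omega2Z : Set (ℤ × ℤ) :=
  {((0:ℤ), (0:ℤ)), (0, 1), (1, 0), (-1, 0), (-1, 1), (0, -1), (1, -1)}

/-- `E_{n,m}^i = (σ^i((ε_n ε̄_n)^∞), (ε_m ε̄_m)^∞)` (the `(j+1)`-st term is `Eseq n m i j`). -/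
def Eseq (n m i : ℕ) : ℕ → ℤ × ℤ := fun j =>
  (per (eps n ++ reflect (eps n)) (j + i), per (eps m ++ reflect (eps m)) j)


/-- `A_k = a₁ ⋯ a_{2^k}` where `a_i = λ_{2i−1}`. -/
def Aword (k : ℕ) : List ℤ := (List.range (2 ^ k)).map fun i => lam (2 * i + 1)

/-- `D_{k,k}^i = (σ^i((A_k Ā_k)^∞), (A_k Ā_k)^∞)`. -/
def Dseq (k i : ℕ) : ℕ → ℤ × ℤ := fun j =>
  (per (Aword k ++ reflect (Aword k)) (j + i), per (Aword k ++ reflect (Aword k)) j)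

/-- `U_q'`: the set of sequences over `{-1,0,1}` which are the unique `q`-expansion
of the number they represent. -/
def uniqSeqSet (q : ℝ) : Set (ℕ → ℤ) :=
  {t | (∀ i, t i ∈ ({-1, 0, 1} : Set ℤ)) ∧
    ∀ s : ℕ → ℤ, (∀ i, s i ∈ ({-1, 0, 1} : Set ℤ)) →
      (∑' i, (s i : ℝ) / q ^ (i + 1)) = (∑' i, (t i : ℝ) / q ^ (i + 1)) → s = t}

/-- `ε_{n-1} ε̄_{n-1}`, with the convention `ε_{-1} ε̄_{-1} := 00`. -/
def epsPair : ℕ → List ℤ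
  | 0 => [0, 0]
  | n + 1 => eps n ++ reflect (eps n)

/-- The finite prefix
`(ε_0 ε̄_0)^{j_0} (ε_0 ε̄_1)^{l_0} ⋯ (ε_{M-1} ε̄_{M-1})^{j_{M-1}} (ε_{M-1} ε̄_M)^{l_{M-1}}`. -/
def blockJL (j l : ℕ → ℕ) : ℕ → List ℤ
  | 0 => []
  | M + 1 => blockJL j l M
      ++ (List.replicate (j M) (eps M ++ reflect (eps M))).flatten
      ++ (List.replicate (l M) (eps M ++ reflect (eps (M + 1)))).flatten

/-- The tail of `t` starting at some position `k` follows the pattern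
`(ε_0 ε̄_0)^{j_0}(ε_0 ε̄_1)^{l_0}(ε_1 ε̄_1)^{j_1}(ε_1 ε̄_2)^{l_1}⋯`. -/
def TailFollows (t : ℕ → ℤ) (j l : ℕ → ℕ) : Prop :=
  ∃ k, ∀ M, ∀ i < (blockJL j l M).length, t (i + k) = (blockJL j l M).getD i 0

/-- As `TailFollows`, but for the reflection of the pattern. -/
def TailFollowsRefl (t : ℕ → ℤ) (j l : ℕ → ℕ) : Prop :=
  ∃ k, ∀ M, ∀ i < (blockJL j l M).length, t (i + k) = -(blockJL j l M).getD i 0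

/-- `a_n = 0 λ₁ ⋯ λ_{2^n−1}`. -/
def aword (n : ℕ) : List ℤ := 0 :: ((List.range (2 ^ n - 1)).map fun i => lam (i + 1))

/-- `b_n = (−1) λ₁ ⋯ λ_{2^n−1}`. -/
def bword (n : ℕ) : List ℤ := (-1) :: ((List.range (2 ^ n - 1)).map fun i => lam (i + 1))

/-- The transitions allowed by the matrix `A` on the alphabet `{a_n, b_n, ā_n, b̄_n}`:
`a→b, a→ā, b→ā, ā→a, ā→b̄, b̄→a`. -/
def allowedTrans (n : ℕ) (u v : List ℤ) : Prop :=
  (u = aword n ∧ (v = bword n ∨ v = reflect (aword n))) ∨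
  (u = bword n ∧ v = reflect (aword n)) ∨
  (u = reflect (aword n) ∧ (v = aword n ∨ v = reflect (bword n))) ∨
  (u = reflect (bword n) ∧ v = aword n)


namespace SGAux

lemma geom_tsum {q : ℝ} (hq : 1 < q) : ∑' i : ℕ, ((q:ℝ) ^ (i+1))⁻¹ = (q-1)⁻¹ := by
  have h0 : (0:ℝ) < q := lt_trans one_pos hq
  have h1 : (0:ℝ) ≤ q⁻¹ := by positivity
  have h2 : q⁻¹ < 1 := inv_lt_one_of_one_lt₀ hq
  calc ∑' i : ℕ, ((q:ℝ) ^ (i+1))⁻¹ = ∑' i : ℕ, q⁻¹ * (q⁻¹)^i := by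
        refine tsum_congr fun i => ?_
        rw [pow_succ, mul_inv, inv_pow]; ring
    _ = q⁻¹ * (1 - q⁻¹)⁻¹ := by rw [tsum_mul_left, tsum_geometric_of_lt_one h1 h2]
    _ = (q-1)⁻¹ := by
        rw [← mul_inv]; congr 1; field_simp

lemma summable_geom {q : ℝ} (hq : 1 < q) : Summable (fun i : ℕ => ((q:ℝ) ^ (i+1))⁻¹) := by
  have h0 : (0:ℝ) < q := lt_trans one_pos hq
  have h2 : q⁻¹ < 1 := inv_lt_one_of_one_lt₀ hq
  have : Summable (fun i : ℕ => q⁻¹ * (q⁻¹)^i) :=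
    (summable_geometric_of_lt_one (by positivity) h2).mul_left _
  refine this.congr fun i => ?_
  rw [pow_succ, mul_inv, inv_pow]; ring

lemma summable_digits {q : ℝ} (hq : 1 < q) {B : ℝ} {t : ℕ → ℝ} (ht : ∀ i, |t i| ≤ B) :
    Summable (fun i => t i / q ^ (i+1)) := by
  have h0 : (0:ℝ) < q := lt_trans one_pos hq
  have hB : 0 ≤ B := le_trans (abs_nonneg _) (ht 0)
  refine Summable.of_norm ?_
  refine Summable.of_nonneg_of_le (fun i => norm_nonneg _) (fun i => ?_)
    (((summable_geom hq)).mul_left B)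
  rw [Real.norm_eq_abs, abs_div, abs_pow, abs_of_pos h0, div_eq_mul_inv]
  exact mul_le_mul_of_nonneg_right (ht i) (by positivity)

lemma abs_tsum_le {q : ℝ} (hq : 1 < q) {B : ℝ} {t : ℕ → ℝ} (ht : ∀ i, |t i| ≤ B) :
    |∑' i, t i / q ^ (i+1)| ≤ B * (q-1)⁻¹ := by
  have h0 : (0:ℝ) < q := lt_trans one_pos hq
  have hs := summable_digits hq ht
  have habs : Summable fun i => |t i / q ^ (i+1)| := hs.abs
  calc |∑' i, t i / q ^ (i+1)| ≤ ∑' i, |t i / q ^ (i+1)| := by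
        have := norm_tsum_le_tsum_norm (f := fun i => t i / q ^ (i+1))
          (by simpa only [Real.norm_eq_abs] using habs)
        simpa only [Real.norm_eq_abs] using this
    _ ≤ ∑' i : ℕ, B * (q ^ (i+1))⁻¹ := by
        refine Summable.tsum_le_tsum (fun i => ?_) habs (((summable_geom hq)).mul_left B)
        rw [abs_div, abs_pow, abs_of_pos h0, div_eq_mul_inv]
        exact mul_le_mul_of_nonneg_right (ht i) (by positivity)
    _ = B * (q-1)⁻¹ := by rw [tsum_mul_left, geom_tsum hq]

lemma tsum_shift {q : ℝ} (hq : 1 < q) {B : ℝ} {t : ℕ → ℝ} (ht : ∀ i, |t i| ≤ B) (n : ℕ) :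
    ∑' i, t i / q ^ (i+1) =
      (∑ i ∈ Finset.range n, t i / q ^ (i+1)) + (q ^ n)⁻¹ * ∑' i, t (i+n) / q ^ (i+1) := by
  have h0 : (0:ℝ) < q := lt_trans one_pos hq
  have hs := summable_digits hq ht
  rw [← Summable.sum_add_tsum_nat_add n hs]
  congr 1
  rw [← tsum_mul_left]
  refine tsum_congr fun i => ?_
  have : (i + n) + 1 = n + (i + 1) := by ring
  rw [this, pow_add]
  field_simp


lemma mem_pm1_cases {x : ℝ} (hx : x ∈ ({-1,0,1} : Set ℝ)) : x = -1 ∨ x = 0 ∨ x = 1 := by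
  simpa [Set.mem_insert_iff] using hx

lemma mem_pm1_abs {x : ℝ} (hx : x ∈ ({-1,0,1} : Set ℝ)) : |x| ≤ 1 := by
  rcases mem_pm1_cases hx with rfl|rfl|rfl <;> norm_num

lemma sep_lower {q : ℝ} (hq : 2 < q) {t : ℕ → ℝ} (ht : ∀ i, t i ∈ ({-1,0,1} : Set ℝ))
    {m : ℕ} (hz : ∀ i < m, t i = 0) (hm : t m ≠ 0) :
    (q-2)/((q-1)*q^(m+1)) ≤ |∑' i, t i / q ^ (i+1)| := by
  have hq1 : (1:ℝ) < q := by linarith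
  have h0 : (0:ℝ) < q := by linarith
  have habs : ∀ i, |t i| ≤ 1 := fun i => mem_pm1_abs (ht i)
  have h1 := tsum_shift hq1 habs m
  have hzero : ∑ i ∈ Finset.range m, t i / q ^ (i+1) = 0 :=
    Finset.sum_eq_zero fun i hi => by rw [hz i (Finset.mem_range.1 hi)]; simp
  set S1 := ∑' i, t (i+m) / q ^ (i+1) with hS1def
  have habs' : ∀ i, |t (i+m)| ≤ 1 := fun i => habs _
  have h2 := tsum_shift hq1 habs' 1
  have hr1 : ∑ i ∈ Finset.range 1, t (i+m) / q ^ (i+1) = t m / q := by simp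
  set S2 := ∑' i, t (i+1+m) / q ^ (i+1) with hS2def
  have hS2le : |S2| ≤ 1 * (q-1)⁻¹ := abs_tsum_le hq1 (fun i => habs (i+1+m))
  have htm : |t m| = 1 := by
    rcases mem_pm1_cases (ht m) with h|h|h
    · rw [h]; norm_num
    · exact absurd h hm
    · rw [h]; norm_num
  have hS1 : S1 = t m / q + q⁻¹ * S2 := by
    rw [hS1def, h2, hr1]
    norm_num
  have hq2pos : (0:ℝ) ≤ q - 2 := by linarith
  have hq1pos : (0:ℝ) < q - 1 := by linarith
  have hS1low : (q-2)/(q*(q-1)) ≤ |S1| := by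
    have h3 : |t m / q| = 1/q := by rw [abs_div, htm, abs_of_pos h0]
    have h4 : |q⁻¹ * S2| ≤ q⁻¹ * (q-1)⁻¹ := by
      rw [abs_mul, abs_inv, abs_of_pos h0]
      have := hS2le
      nlinarith [abs_nonneg S2, inv_pos.2 h0]
    have h5 : |t m / q| - |(-(q⁻¹ * S2))| ≤ |t m / q - (-(q⁻¹ * S2))| :=
      abs_sub_abs_le_abs_sub _ _
    rw [sub_neg_eq_add, ← hS1] at h5
    have h6 : (q-2)/(q*(q-1)) = 1/q - q⁻¹ * (q-1)⁻¹ := by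
      field_simp
      ring
    rw [h6]
    have : |(-(q⁻¹ * S2))| = |q⁻¹ * S2| := abs_neg _
    rw [this] at h5
    linarith [h5, h3 ▸ le_refl (|t m / q|)]
  rw [h1, hzero, zero_add, abs_mul, abs_inv, abs_pow, abs_of_pos h0]
  have heq : (q-2)/((q-1)*q^(m+1)) = (q^m)⁻¹ * ((q-2)/(q*(q-1))) := by
    rw [inv_mul_eq_div, div_div]
    congr 1
    rw [pow_succ]; ring
  rw [heq]
  exact mul_le_mul_of_nonneg_left hS1low (by positivity)


def piQ (q : ℝ) (c : ℕ → ℝ × ℝ) : ℝ × ℝ := ∑' i, (q ^ (i+1))⁻¹ • c i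

lemma mem_Omega1_cases {a : ℝ × ℝ} (h : a ∈ Omega1) :
    a = (0,0) ∨ a = (0,1) ∨ a = (1,0) := by
  simpa [Omega1, Set.mem_insert_iff] using h

lemma Omega1_fst {a : ℝ × ℝ} (h : a ∈ Omega1) : a.1 = 0 ∨ a.1 = 1 := by
  rcases mem_Omega1_cases h with rfl|rfl|rfl <;> norm_num

lemma Omega1_snd {a : ℝ × ℝ} (h : a ∈ Omega1) : a.2 = 0 ∨ a.2 = 1 := by
  rcases mem_Omega1_cases h with rfl|rfl|rfl <;> norm_num

lemma Omega1_norm {a : ℝ × ℝ} (h : a ∈ Omega1) : ‖a‖ ≤ 1 := by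
  rcases mem_Omega1_cases h with rfl|rfl|rfl <;>
    simp [Prod.norm_def, Real.norm_eq_abs] <;> norm_num

lemma mem_Omega2_cases {a : ℝ × ℝ} (h : a ∈ Omega2) :
    a = (0,0) ∨ a = (0,1) ∨ a = (1,0) ∨ a = (-1,0) ∨ a = (-1,1) ∨ a = (0,-1) ∨ a = (1,-1) := by
  simpa [Omega2, Set.mem_insert_iff] using h

lemma Omega2_fst {a : ℝ × ℝ} (h : a ∈ Omega2) : a.1 ∈ ({-1,0,1} : Set ℝ) := by
  rcases mem_Omega2_cases h with rfl|rfl|rfl|rfl|rfl|rfl|rfl <;> norm_num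

lemma Omega2_snd {a : ℝ × ℝ} (h : a ∈ Omega2) : a.2 ∈ ({-1,0,1} : Set ℝ) := by
  rcases mem_Omega2_cases h with rfl|rfl|rfl|rfl|rfl|rfl|rfl <;> norm_num

lemma Omega2_norm {a : ℝ × ℝ} (h : a ∈ Omega2) : ‖a‖ ≤ 1 := by
  rcases mem_Omega2_cases h with rfl|rfl|rfl|rfl|rfl|rfl|rfl <;>
    simp [Prod.norm_def, Real.norm_eq_abs] <;> norm_num

lemma abs_fst_le' (x : ℝ × ℝ) : |x.1| ≤ ‖x‖ := by
  simpa [Real.norm_eq_abs] using norm_fst_le x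

lemma abs_snd_le' (x : ℝ × ℝ) : |x.2| ≤ ‖x‖ := by
  simpa [Real.norm_eq_abs] using norm_snd_le x

lemma abs_sub_le' (x y : ℝ) : |x - y| ≤ |x| + |y| := by
  rw [sub_eq_add_neg]
  exact (abs_add_le _ _).trans (by rw [abs_neg])

lemma diff01_mem {x y : ℝ} (hx : x = 0 ∨ x = 1) (hy : y = 0 ∨ y = 1) :
    x - y ∈ ({-1,0,1} : Set ℝ) := by
  rcases hx with rfl|rfl <;> rcases hy with rfl|rfl <;> norm_num

lemma summable_piQ {q : ℝ} (hq : 1 < q) {c : ℕ → ℝ × ℝ} (hc : ∀ i, ‖c i‖ ≤ 1) :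
    Summable fun i => (q ^ (i+1))⁻¹ • c i := by
  have h0 : (0:ℝ) < q := lt_trans one_pos hq
  refine Summable.of_norm ?_
  refine Summable.of_nonneg_of_le (fun i => norm_nonneg _) (fun i => ?_) (summable_geom hq)
  rw [norm_smul, Real.norm_eq_abs, abs_inv, abs_pow, abs_of_pos h0]
  calc (q^(i+1))⁻¹ * ‖c i‖ ≤ (q^(i+1))⁻¹ * 1 :=
        mul_le_mul_of_nonneg_left (hc i) (by positivity)
    _ = (q^(i+1))⁻¹ := mul_one _

lemma piQ_fst {q : ℝ} (hq : 1 < q) {c : ℕ → ℝ × ℝ} (hc : ∀ i, ‖c i‖ ≤ 1) :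
    (piQ q c).1 = ∑' i, (c i).1 / q ^ (i+1) := by
  have hs := summable_piQ hq hc
  have h := (ContinuousLinearMap.fst ℝ ℝ ℝ).map_tsum hs
  simp only [piQ]
  rw [show (∑' i, (q ^ (i+1))⁻¹ • c i).1
      = (ContinuousLinearMap.fst ℝ ℝ ℝ) (∑' i, (q ^ (i+1))⁻¹ • c i) from rfl, h]
  refine tsum_congr fun i => ?_
  simp [ContinuousLinearMap.fst, div_eq_inv_mul]

lemma piQ_snd {q : ℝ} (hq : 1 < q) {c : ℕ → ℝ × ℝ} (hc : ∀ i, ‖c i‖ ≤ 1) :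
    (piQ q c).2 = ∑' i, (c i).2 / q ^ (i+1) := by
  have hs := summable_piQ hq hc
  have h := (ContinuousLinearMap.snd ℝ ℝ ℝ).map_tsum hs
  simp only [piQ]
  rw [show (∑' i, (q ^ (i+1))⁻¹ • c i).2
      = (ContinuousLinearMap.snd ℝ ℝ ℝ) (∑' i, (q ^ (i+1))⁻¹ • c i) from rfl, h]
  refine tsum_congr fun i => ?_
  simp [ContinuousLinearMap.snd, div_eq_inv_mul]

lemma piQ_sub_fst {q : ℝ} (hq : 1 < q) {c c' : ℕ → ℝ × ℝ}
    (hc : ∀ i, ‖c i‖ ≤ 1) (hc' : ∀ i, ‖c' i‖ ≤ 1) :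
    (piQ q c).1 - (piQ q c').1 = ∑' i, ((c i).1 - (c' i).1) / q ^ (i+1) := by
  have h1 : ∀ i, |(c i).1| ≤ 1 := fun i => le_trans (abs_fst_le' _) (hc i)
  have h2 : ∀ i, |(c' i).1| ≤ 1 := fun i => le_trans (abs_fst_le' _) (hc' i)
  rw [piQ_fst hq hc, piQ_fst hq hc', ← Summable.tsum_sub (summable_digits hq h1) (summable_digits hq h2)]
  refine tsum_congr fun i => ?_
  rw [sub_div]

lemma piQ_sub_snd {q : ℝ} (hq : 1 < q) {c c' : ℕ → ℝ × ℝ}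
    (hc : ∀ i, ‖c i‖ ≤ 1) (hc' : ∀ i, ‖c' i‖ ≤ 1) :
    (piQ q c).2 - (piQ q c').2 = ∑' i, ((c i).2 - (c' i).2) / q ^ (i+1) := by
  have h1 : ∀ i, |(c i).2| ≤ 1 := fun i => le_trans (abs_snd_le' _) (hc i)
  have h2 : ∀ i, |(c' i).2| ≤ 1 := fun i => le_trans (abs_snd_le' _) (hc' i)
  rw [piQ_snd hq hc, piQ_snd hq hc', ← Summable.tsum_sub (summable_digits hq h1) (summable_digits hq h2)]
  refine tsum_congr fun i => ?_
  rw [sub_div]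

lemma dist_piQ_lower {q : ℝ} (hq : 2 < q) {c c' : ℕ → ℝ × ℝ}
    (hc : ∀ i, c i ∈ Omega1) (hc' : ∀ i, c' i ∈ Omega1)
    {m : ℕ} (hz : ∀ i < m, c i = c' i) (hm : c m ≠ c' m) :
    (q-2)/((q-1)*q^(m+1)) ≤ dist (piQ q c) (piQ q c') := by
  have hq1 : (1:ℝ) < q := by linarith
  have hcn : ∀ i, ‖c i‖ ≤ 1 := fun i => Omega1_norm (hc i)
  have hcn' : ∀ i, ‖c' i‖ ≤ 1 := fun i => Omega1_norm (hc' i)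
  have hcoord : (c m).1 ≠ (c' m).1 ∨ (c m).2 ≠ (c' m).2 := by
    by_contra h
    push_neg at h
    exact hm (Prod.ext h.1 h.2)
  rcases hcoord with h|h
  · set u : ℕ → ℝ := fun i => (c i).1 - (c' i).1 with hu
    have hmem : ∀ i, u i ∈ ({-1,0,1} : Set ℝ) :=
      fun i => diff01_mem (Omega1_fst (hc i)) (Omega1_fst (hc' i))
    have hzz : ∀ i < m, u i = 0 := fun i hi => by simp [hu, hz i hi]
    have hmm : u m ≠ 0 := sub_ne_zero.2 h
    have := sep_lower hq hmem hzz hmm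
    calc (q-2)/((q-1)*q^(m+1)) ≤ |∑' i, u i / q ^ (i+1)| := this
      _ = |(piQ q c).1 - (piQ q c').1| := by rw [piQ_sub_fst hq1 hcn hcn']
      _ = dist (piQ q c).1 (piQ q c').1 := (Real.dist_eq _ _).symm
      _ ≤ dist (piQ q c) (piQ q c') := by
          rw [Prod.dist_eq]; exact le_max_left _ _
  · set u : ℕ → ℝ := fun i => (c i).2 - (c' i).2 with hu
    have hmem : ∀ i, u i ∈ ({-1,0,1} : Set ℝ) :=
      fun i => diff01_mem (Omega1_snd (hc i)) (Omega1_snd (hc' i))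
    have hzz : ∀ i < m, u i = 0 := fun i hi => by simp [hu, hz i hi]
    have hmm : u m ≠ 0 := sub_ne_zero.2 h
    have := sep_lower hq hmem hzz hmm
    calc (q-2)/((q-1)*q^(m+1)) ≤ |∑' i, u i / q ^ (i+1)| := this
      _ = |(piQ q c).2 - (piQ q c').2| := by rw [piQ_sub_snd hq1 hcn hcn']
      _ = dist (piQ q c).2 (piQ q c').2 := (Real.dist_eq _ _).symm
      _ ≤ dist (piQ q c) (piQ q c') := by
          rw [Prod.dist_eq]; exact le_max_right _ _

lemma piQ_inj {q : ℝ} (hq : 2 < q) {c c' : ℕ → ℝ × ℝ}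
    (hc : ∀ i, c i ∈ Omega1) (hc' : ∀ i, c' i ∈ Omega1)
    (h : piQ q c = piQ q c') : c = c' := by
  by_contra hne
  have hex : ∃ i, c i ≠ c' i := Function.ne_iff.1 hne
  have hz : ∀ i < Nat.find hex, c i = c' i := fun i hi => not_not.1 (Nat.find_min hex hi)
  have hlow := dist_piQ_lower hq hc hc' hz (Nat.find_spec hex)
  rw [h, dist_self] at hlow
  have : 0 < (q-2)/((q-1)*q^(Nat.find hex + 1)) := by
    apply div_pos (by linarith)
    apply mul_pos (by linarith)
    positivity
  linarith

lemma dist_piQ_upper {q : ℝ} (hq : 1 < q) {c c' : ℕ → ℝ × ℝ}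
    (hc : ∀ i, ‖c i‖ ≤ 1) (hc' : ∀ i, ‖c' i‖ ≤ 1)
    (n : ℕ) (hagree : ∀ i < n, c i = c' i) :
    dist (piQ q c) (piQ q c') ≤ 2*(q-1)⁻¹ * (q^n)⁻¹ := by
  have key : ∀ (u : ℕ → ℝ), (∀ i, |u i| ≤ 2) → (∀ i < n, u i = 0) →
      |∑' i, u i / q ^ (i+1)| ≤ 2*(q-1)⁻¹ * (q^n)⁻¹ := by
    intro u hu hz
    rw [tsum_shift hq hu n, Finset.sum_eq_zero (fun i hi => by
      rw [hz i (Finset.mem_range.1 hi)]; simp), zero_add, abs_mul, abs_inv, abs_pow,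
      abs_of_pos (by linarith : (0:ℝ) < q)]
    have := abs_tsum_le hq (fun i => hu (i + n))
    calc (q^n)⁻¹ * |∑' i, u (i+n) / q ^ (i+1)| ≤ (q^n)⁻¹ * (2 * (q-1)⁻¹) :=
          mul_le_mul_of_nonneg_left this (by positivity)
      _ = 2*(q-1)⁻¹ * (q^n)⁻¹ := by ring
  rw [Prod.dist_eq, max_le_iff]
  constructor
  · rw [Real.dist_eq, piQ_sub_fst hq hc hc']
    refine key _ (fun i => ?_) (fun i hi => by rw [hagree i hi]; ring)
    have h1 : |(c i).1| ≤ 1 := le_trans (abs_fst_le' _) (hc i)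
    have h2 : |(c' i).1| ≤ 1 := le_trans (abs_fst_le' _) (hc' i)
    calc |(c i).1 - (c' i).1| ≤ |(c i).1| + |(c' i).1| := abs_sub_le' _ _
      _ ≤ 2 := by linarith
  · rw [Real.dist_eq, piQ_sub_snd hq hc hc']
    refine key _ (fun i => ?_) (fun i hi => by rw [hagree i hi]; ring)
    have h1 : |(c i).2| ≤ 1 := le_trans (abs_snd_le' _) (hc i)
    have h2 : |(c' i).2| ≤ 1 := le_trans (abs_snd_le' _) (hc' i)
    calc |(c i).2 - (c' i).2| ≤ |(c i).2| + |(c' i).2| := abs_sub_le' _ _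
      _ ≤ 2 := by linarith


def forced (w : ℝ × ℝ) : ℝ × ℝ :=
  if w = (0,1) then (0,1) else if w = (1,0) then (1,0)
  else if w = (-1,1) then (0,1) else if w = (1,-1) then (1,0) else (0,0)

def AF (w : ℝ × ℝ) : Finset (ℝ × ℝ) :=
  if w = ((0:ℝ),(0:ℝ)) then {(0,0),(0,1),(1,0)} else {forced w}

lemma mem_AF_iff {w : ℝ × ℝ} (hw : w ∈ Omega2) (a : ℝ × ℝ) :
    a ∈ AF w ↔ (a ∈ Omega1 ∧ a - w ∈ Omega1) := by
  rcases mem_Omega2_cases hw with rfl|rfl|rfl|rfl|rfl|rfl|rfl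
  · have h0 : a - ((0:ℝ),(0:ℝ)) = a := by ext <;> simp
    rw [h0]
    simp [AF, Omega1, and_self]
  all_goals (
    constructor
    · intro h
      norm_num [AF, forced, Prod.ext_iff] at h
      obtain ⟨h1, h2⟩ := h
      constructor
      · norm_num [Omega1, Prod.ext_iff, h1, h2]
      · norm_num [Omega1, Prod.ext_iff, Prod.mk_sub_mk, h1, h2]
    · rintro ⟨h1, h2⟩
      rcases (by simpa [Omega1] using h1 : a = ((0:ℝ),(0:ℝ)) ∨ a = (0,1) ∨ a = (1,0)) with
        rfl|rfl|rfl <;>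
        (revert h2; norm_num [Omega1, Prod.ext_iff, Prod.mk_sub_mk, AF, forced]))

lemma AF_mem_Omega1 {w : ℝ × ℝ} (hw : w ∈ Omega2) {a : ℝ × ℝ} (ha : a ∈ AF w) :
    a ∈ Omega1 := ((mem_AF_iff hw a).1 ha).1

lemma AF_card {w : ℝ × ℝ} :
    (AF w).card = if w = ((0:ℝ),(0:ℝ)) then 3 else 1 := by
  by_cases h : w = ((0:ℝ),(0:ℝ))
  · rw [AF, if_pos h, if_pos h]
    rw [Finset.card_insert_of_notMem (by norm_num [Prod.ext_iff]),
      Finset.card_insert_of_notMem (by norm_num [Prod.ext_iff]), Finset.card_singleton]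
  · rw [AF, if_neg h, if_neg h, Finset.card_singleton]

lemma inter_desc {q : ℝ} (hq2 : 2 < q) {t : ℝ × ℝ} {ts : ℕ → ℝ × ℝ}
    (hts : ∀ i, ts i ∈ Omega2) (hexp : t = piQ q ts)
    (h1 : t.1 ∈ uniqSet q) (h2 : t.2 ∈ uniqSet q) :
    gasket q ∩ ((· + t) '' gasket q)
      = {x | ∃ c : ℕ → ℝ × ℝ, (∀ i, c i ∈ AF (ts i)) ∧ x = piQ q c} := by
  have hq1 : (1:ℝ) < q := by linarith
  have htsn : ∀ i, ‖ts i‖ ≤ 1 := fun i => Omega2_norm (hts i)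
  ext x
  constructor
  · rintro ⟨⟨c, hc, hxc⟩, ⟨y, ⟨c', hc', hyc'⟩, hxy⟩⟩
    have hcn : ∀ i, ‖c i‖ ≤ 1 := fun i => Omega1_norm (hc i)
    have hcn' : ∀ i, ‖c' i‖ ≤ 1 := fun i => Omega1_norm (hc' i)
    have hxyt : x - y = t := by
      simp only at hxy
      rw [← hxy]; abel
    have hxp : x = piQ q c := hxc
    have hyp : y = piQ q c' := hyc'
    have hdiff1 : ∑' i, ((c i).1 - (c' i).1)/q^(i+1) = t.1 := by
      rw [← piQ_sub_fst hq1 hcn hcn', ← hxp, ← hyp, ← hxyt]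
      rfl
    have hdiff2 : ∑' i, ((c i).2 - (c' i).2)/q^(i+1) = t.2 := by
      rw [← piQ_sub_snd hq1 hcn hcn', ← hxp, ← hyp, ← hxyt]
      rfl
    have hts1 : t.1 = ∑' i, (ts i).1 / q^(i+1) := by rw [hexp]; exact piQ_fst hq1 htsn
    have hts2 : t.2 = ∑' i, (ts i).2 / q^(i+1) := by rw [hexp]; exact piQ_snd hq1 htsn
    obtain ⟨w1, _, huniq1⟩ := h1.2
    obtain ⟨w2, _, huniq2⟩ := h2.2
    have e1 : (fun i => (c i).1 - (c' i).1) = w1 :=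
      huniq1 _ ⟨fun i => diff01_mem (Omega1_fst (hc i)) (Omega1_fst (hc' i)), hdiff1.symm⟩
    have e2 : (fun i => (ts i).1) = w1 :=
      huniq1 _ ⟨fun i => Omega2_fst (hts i), hts1⟩
    have e3 : (fun i => (c i).2 - (c' i).2) = w2 :=
      huniq2 _ ⟨fun i => diff01_mem (Omega1_snd (hc i)) (Omega1_snd (hc' i)), hdiff2.symm⟩
    have e4 : (fun i => (ts i).2) = w2 :=
      huniq2 _ ⟨fun i => Omega2_snd (hts i), hts2⟩
    have hsub : ∀ i, c i - ts i = c' i := by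
      intro i
      have k1 : (c i).1 - (c' i).1 = (ts i).1 := by
        rw [show (c i).1 - (c' i).1 = (fun i => (c i).1 - (c' i).1) i from rfl, e1, ← e2]
      have k2 : (c i).2 - (c' i).2 = (ts i).2 := by
        rw [show (c i).2 - (c' i).2 = (fun i => (c i).2 - (c' i).2) i from rfl, e3, ← e4]
      have : c i - c' i = ts i := Prod.ext (by simpa using k1) (by simpa using k2)
      rw [← this]; abel
    refine ⟨c, fun i => (mem_AF_iff (hts i) (c i)).2 ⟨hc i, ?_⟩, hxc⟩
    rw [hsub i]; exact hc' i
  · rintro ⟨c, hc, hxc⟩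
    have hprops := fun i => (mem_AF_iff (hts i) (c i)).1 (hc i)
    have hcn : ∀ i, ‖c i‖ ≤ 1 := fun i => Omega1_norm (hprops i).1
    have hsum1 := summable_piQ hq1 hcn
    have hsum2 := summable_piQ hq1 htsn
    have hdiff : x - t = piQ q (fun i => c i - ts i) := by
      rw [hxc, hexp, piQ, piQ, piQ, ← Summable.tsum_sub hsum1 hsum2]
      exact tsum_congr fun i => (smul_sub _ _ _).symm
    refine ⟨⟨c, fun i => (hprops i).1, hxc⟩, ⟨x - t, ⟨fun i => c i - ts i,
      fun i => (hprops i).2, hdiff⟩, by simp⟩⟩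


/-- number of zero digits among the first `n`. -/
def cnt (ts : ℕ → ℝ × ℝ) (n : ℕ) : ℕ :=
  ((Finset.range n).filter (fun i => ts i = ((0:ℝ),(0:ℝ)))).card

lemma cnt_le (ts : ℕ → ℝ × ℝ) (n : ℕ) : cnt ts n ≤ n := by
  calc cnt ts n ≤ (Finset.range n).card := Finset.card_filter_le _ _
    _ = n := Finset.card_range n

/-- the Moran set determined by the digit sequence `ts`. -/
def moran (q : ℝ) (ts : ℕ → ℝ × ℝ) : Set (ℝ × ℝ) :=
  {x | ∃ c : ℕ → ℝ × ℝ, (∀ i, c i ∈ AF (ts i)) ∧ x = piQ q c}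

lemma measure_moran_zero {q : ℝ} (hq : 2 < q) {ts : ℕ → ℝ × ℝ} (hts : ∀ i, ts i ∈ Omega2)
    {d : ℝ}
    (hd : Real.log 3 / Real.log q *
      liminf (fun n : ℕ => ((cnt ts n : ℝ))/n) atTop < d) :
    μH[d] (moran q ts) = 0 := by
  classical
  have hq1 : (1:ℝ) < q := by linarith
  have hq0 : (0:ℝ) < q := by linarith
  have hlogq : 0 < Real.log q := Real.log_pos hq1
  have hlog3 : 0 < Real.log 3 := Real.log_pos (by norm_num)
  set L : ℝ := liminf (fun n : ℕ => ((cnt ts n : ℝ))/n) atTop with hLdef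
  have hub : ∀ n : ℕ, ((cnt ts n : ℝ))/n ≤ 1 := by
    intro n
    rcases Nat.eq_zero_or_pos n with rfl|hn
    · simp
    · rw [div_le_one (by exact_mod_cast hn)]
      exact_mod_cast cnt_le ts n
  have hlb : ∀ n : ℕ, (0:ℝ) ≤ ((cnt ts n : ℝ))/n := fun n => by positivity
  have hbddA : IsBoundedUnder (· ≤ ·) atTop (fun n : ℕ => ((cnt ts n : ℝ))/n) :=
    ⟨1, Filter.eventually_map.2 (Filter.Eventually.of_forall hub)⟩
  have hbddB : IsBoundedUnder (· ≥ ·) atTop (fun n : ℕ => ((cnt ts n : ℝ))/n) :=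
    ⟨0, Filter.eventually_map.2 (Filter.Eventually.of_forall hlb)⟩
  have hL0 : 0 ≤ L := le_liminf_of_le hbddA.isCoboundedUnder_ge
    (Filter.Eventually.of_forall hlb)
  have hd0 : 0 < d :=
    lt_of_le_of_lt (mul_nonneg (div_nonneg hlog3.le hlogq.le) hL0) hd
  -- the basic covering estimate
  set R : ℝ := 2*(q-1)⁻¹ with hRdef
  have hR0 : 0 < R := by
    rw [hRdef]
    have : (0:ℝ) < (q-1)⁻¹ := by
      apply inv_pos.2; linarith
    linarith
  set r : ℕ → ℝ≥0∞ := fun n => ENNReal.ofReal (R * (q^n)⁻¹) with hrdef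
  set cov : ∀ n : ℕ, (∀ i : Fin n, ↥(AF (ts (i:ℕ)))) → Set (ℝ × ℝ) :=
    fun n f => {x | ∃ c : ℕ → ℝ × ℝ, (∀ i, c i ∈ AF (ts i)) ∧
      (∀ i : Fin n, c (i:ℕ) = ((f i : ℝ × ℝ))) ∧ x = piQ q c} with hcovdef
  have hdiam : ∀ n : ℕ, ∀ f, EMetric.diam (cov n f) ≤ r n := by
    intro n f
    apply EMetric.diam_le
    rintro x ⟨c, hc, hcf, rfl⟩ y ⟨c', hc', hcf', rfl⟩
    rw [edist_dist]
    apply ENNReal.ofReal_le_ofReal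
    have hcn : ∀ i, ‖c i‖ ≤ 1 := fun i => Omega1_norm (AF_mem_Omega1 (hts i) (hc i))
    have hcn' : ∀ i, ‖c' i‖ ≤ 1 := fun i => Omega1_norm (AF_mem_Omega1 (hts i) (hc' i))
    have := dist_piQ_upper hq1 hcn hcn' n (fun i hi => by
      rw [hcf ⟨i, hi⟩, hcf' ⟨i, hi⟩])
    simpa [hRdef] using this
  have hrtend : Tendsto r atTop (𝓝 0) := by
    have h1 : Tendsto (fun n : ℕ => (q^n)⁻¹) atTop (𝓝 0) :=
      tendsto_inv_atTop_zero.comp (tendsto_pow_atTop_atTop_of_one_lt hq1)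
    have h2 : Tendsto (fun n : ℕ => R * (q^n)⁻¹) atTop (𝓝 (R * 0)) := h1.const_mul R
    rw [mul_zero] at h2
    have := ENNReal.tendsto_ofReal h2
    simpa [hrdef] using this
  have hcover : ∀ n : ℕ, moran q ts ⊆ ⋃ f, cov n f := by
    intro n x ⟨c, hc, hxc⟩
    exact Set.mem_iUnion.2 ⟨fun i => ⟨c (i:ℕ), hc (i:ℕ)⟩, ⟨c, hc, fun i => rfl, hxc⟩⟩
  have hmain := MeasureTheory.Measure.hausdorffMeasure_le_liminf_sum d (moran q ts) r hrtend cov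
    (Filter.Eventually.of_forall hdiam) (Filter.Eventually.of_forall hcover)
  -- the cardinality of the index type
  have hcard : ∀ n : ℕ, (Fintype.card (∀ i : Fin n, ↥(AF (ts (i:ℕ))))) = 3 ^ (cnt ts n) := by
    intro n
    rw [Fintype.card_pi]
    simp_rw [Fintype.card_coe]
    rw [Fin.prod_univ_eq_prod_range (fun i => (AF (ts i)).card) n]
    simp_rw [AF_card]
    rw [Finset.prod_ite, Finset.prod_const, Finset.prod_const, one_pow, mul_one]
    rfl
  -- bound the sums
  have hsumbound : ∀ n : ℕ, (∑ f : (∀ i : Fin n, ↥(AF (ts (i:ℕ)))),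
      EMetric.diam (cov n f) ^ d) ≤ ((3:ℝ≥0∞)) ^ (cnt ts n) * (r n) ^ d := by
    intro n
    calc (∑ f : (∀ i : Fin n, ↥(AF (ts (i:ℕ)))), EMetric.diam (cov n f) ^ d)
        ≤ ∑ _f : (∀ i : Fin n, ↥(AF (ts (i:ℕ)))), (r n) ^ d :=
          Finset.sum_le_sum fun f _ => ENNReal.rpow_le_rpow (hdiam n f) hd0.le
      _ = (Fintype.card (∀ i : Fin n, ↥(AF (ts (i:ℕ))))) • ((r n) ^ d) := by
          rw [Finset.sum_const, Finset.card_univ]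
      _ = ((3:ℝ≥0∞)) ^ (cnt ts n) * (r n) ^ d := by
          rw [hcard n, nsmul_eq_mul]
          push_cast
          ring
  set A : ℕ → ℝ≥0∞ := fun n => ((3:ℝ≥0∞)) ^ (cnt ts n) * (r n) ^ d with hAdef
  have hliminfA : liminf (fun n => ∑ f : (∀ i : Fin n, ↥(AF (ts (i:ℕ)))),
      EMetric.diam (cov n f) ^ d) atTop ≤ liminf A atTop :=
    liminf_le_liminf (Filter.Eventually.of_forall hsumbound)
  set ε : ℝ := (d * Real.log q - L * Real.log 3)/(2 * Real.log 3) with hεdef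
  have hdq : L * Real.log 3 < d * Real.log q := by
    have h' : (Real.log 3 / Real.log q * L) * Real.log q < d * Real.log q :=
      mul_lt_mul_of_pos_right hd hlogq
    calc L * Real.log 3 = (Real.log 3 / Real.log q * L) * Real.log q := by
          field_simp
      _ < d * Real.log q := h'
  have hε : 0 < ε := by
    apply div_pos (by linarith) (by linarith)
  have hεlog : ε * Real.log 3 = (d * Real.log q - L * Real.log 3)/2 := by
    rw [hεdef, div_mul_eq_mul_div, mul_comm (2:ℝ) (Real.log 3), ← div_div,
      mul_div_assoc, div_self hlog3.ne', mul_one]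
  have hkey2 : (L+ε) * Real.log 3 < d * Real.log q := by
    have : (L+ε)*Real.log 3 = L * Real.log 3 + ε * Real.log 3 := by ring
    rw [this, hεlog]; linarith
  set ρ : ℝ := Real.exp ((L+ε) * Real.log 3 - d * Real.log q) with hρdef
  have hρ0 : (0:ℝ) ≤ ρ := (Real.exp_pos _).le
  have hρ1 : ρ < 1 := by
    rw [hρdef, ← Real.exp_zero]
    exact Real.exp_lt_exp.2 (by linarith)
  have hRd0 : (0:ℝ) < R ^ d := Real.rpow_pos_of_pos hR0 d
  have htend : Tendsto (fun n : ℕ => R^d * ρ^n) atTop (𝓝 0) := by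
    have h1 := tendsto_pow_atTop_nhds_zero_of_lt_one hρ0 hρ1
    have h2 := h1.const_mul (R^d)
    simpa using h2
  have hAbound : ∀ n : ℕ, 1 ≤ n → (cnt ts n : ℝ) ≤ (L+ε)*n →
      A n ≤ ENNReal.ofReal (R^d * ρ^n) := by
    intro n hn hcntle
    have hpos : (0:ℝ) < R * (q^n)⁻¹ := by positivity
    have e1 : (r n) ^ d = ENNReal.ofReal ((R * (q^n)⁻¹) ^ d) := by
      rw [hrdef]; exact ENNReal.ofReal_rpow_of_pos hpos
    have e2 : ENNReal.ofReal ((3:ℝ) ^ (cnt ts n)) = ((3:ℝ≥0∞)) ^ (cnt ts n) := by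
      rw [ENNReal.ofReal_pow (by norm_num : (0:ℝ) ≤ 3)]
      norm_num
    rw [hAdef]
    simp only
    rw [e1, ← e2, ← ENNReal.ofReal_mul (by positivity)]
    apply ENNReal.ofReal_le_ofReal
    have h3 : (3:ℝ) ^ (cnt ts n) ≤ Real.exp ((L+ε)*n * Real.log 3) := by
      have e3 : (3:ℝ)^(cnt ts n) = Real.exp ((cnt ts n) * Real.log 3) := by
        rw [Real.exp_nat_mul, Real.exp_log (by norm_num : (0:ℝ) < 3)]
      rw [e3]
      exact Real.exp_le_exp.2 (mul_le_mul_of_nonneg_right hcntle hlog3.le)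
    have h4 : (R * (q^n)⁻¹)^d = R^d * Real.exp (-(d * (n * Real.log q))) := by
      rw [Real.mul_rpow hR0.le (by positivity), Real.inv_rpow (by positivity)]
      congr 1
      rw [← Real.log_pow, Real.rpow_def_of_pos (by positivity), Real.exp_neg]
      congr 2
      ring
    have h5 : Real.exp ((L+ε)*n*Real.log 3) * Real.exp (-(d*(n*Real.log q))) = ρ^n := by
      rw [← Real.exp_add, hρdef, ← Real.exp_nat_mul]
      congr 1
      ring
    calc (3:ℝ)^(cnt ts n) * (R*(q^n)⁻¹)^d
        ≤ Real.exp ((L+ε)*n*Real.log 3) * (R*(q^n)⁻¹)^d :=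
          mul_le_mul_of_nonneg_right h3 (Real.rpow_nonneg hpos.le d)
      _ = R^d * (Real.exp ((L+ε)*n*Real.log 3) * Real.exp (-(d*(n*Real.log q)))) := by
          rw [h4]; ring
      _ = R^d * ρ^n := by rw [h5]
  have hliminf0 : liminf A atTop = 0 := by
    rw [← le_zero_iff]
    refine ENNReal.le_of_forall_pos_le_add fun δ hδ _ => ?_
    rw [zero_add]
    have hδR : (0:ℝ) < (δ:ℝ) := by exact_mod_cast hδ
    have hfreq : ∃ᶠ n in atTop, ((cnt ts n : ℝ))/n < L + ε :=
      frequently_lt_of_liminf_lt hbddA.isCoboundedUnder_ge (by linarith)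
    have hev : ∀ᶠ n : ℕ in atTop, 1 ≤ n ∧ R^d * ρ^n < (δ:ℝ) := by
      filter_upwards [Filter.eventually_ge_atTop 1,
        htend.eventually_lt_const hδR] with n h1 h2
      exact ⟨h1, h2⟩
    refine liminf_le_of_frequently_le' ?_
    refine (hfreq.and_eventually hev).mono ?_
    rintro n ⟨hlt, hn1, hsmall⟩
    have hnpos : (0:ℝ) < n := by exact_mod_cast hn1
    have hcnt : (cnt ts n : ℝ) ≤ (L+ε)*n := by
      rw [div_lt_iff₀ hnpos] at hlt
      linarith
    calc A n ≤ ENNReal.ofReal (R^d * ρ^n) := hAbound n hn1 hcnt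
      _ ≤ ((δ:ℝ≥0):ℝ≥0∞) := by
          rw [← ENNReal.ofReal_coe_nnreal]
          exact ENNReal.ofReal_le_ofReal hsmall.le
  have hfinal : μH[d] (moran q ts) ≤ 0 := le_trans hmain (le_trans hliminfA hliminf0.le)
  exact le_antisymm hfinal (zero_le)


lemma dimH_moran_le {q : ℝ} (hq : 2 < q) {ts : ℕ → ℝ × ℝ} (hts : ∀ i, ts i ∈ Omega2) :
    dimH (moran q ts) ≤ ENNReal.ofReal (Real.log 3 / Real.log q *
      liminf (fun n : ℕ => ((cnt ts n : ℝ))/n) atTop) := by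
  refine dimH_le fun d' hd' => ?_
  by_contra hnot
  push_neg at hnot
  have hd'ne : d' ≠ 0 := by
    rintro rfl
    simp at hnot
  have hdpos : (0:ℝ) < (d' : ℝ) := by
    have : 0 < d' := pos_iff_ne_zero.2 hd'ne
    exact_mod_cast this
  have hlt : Real.log 3 / Real.log q *
      liminf (fun n : ℕ => ((cnt ts n : ℝ))/n) atTop < (d' : ℝ) := by
    rw [← ENNReal.ofReal_coe_nnreal] at hnot
    exact (ENNReal.ofReal_lt_ofReal_iff hdpos).1 hnot
  have h0 := measure_moran_zero hq hts hlt
  rw [h0] at hd'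
  simp at hd'

def terRem (r : ℝ) : ℕ → ℝ
  | 0 => r
  | (k+1) => 3 * terRem r k - ((min 2 ⌊3 * terRem r k⌋₊ : ℕ) : ℝ)

def terDig (r : ℝ) (k : ℕ) : ℕ := min 2 ⌊3 * terRem r k⌋₊

lemma terRem_mem {r : ℝ} (h : r ∈ Set.Icc (0:ℝ) 1) : ∀ k, terRem r k ∈ Set.Icc (0:ℝ) 1 := by
  intro k
  induction k with
  | zero => exact h
  | succ k ih =>
    obtain ⟨h0, h1⟩ := ih
    have h3 : (0:ℝ) ≤ 3 * terRem r k := by linarith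
    have hfl := Nat.floor_le h3
    have hfu := Nat.lt_floor_add_one (3 * terRem r k)
    rcases le_or_gt (⌊3 * terRem r k⌋₊) 2 with hle|hgt
    · have hm : min 2 ⌊3 * terRem r k⌋₊ = ⌊3 * terRem r k⌋₊ := min_eq_right hle
      show 3 * terRem r k - ((min 2 ⌊3 * terRem r k⌋₊ : ℕ) : ℝ) ∈ Set.Icc (0:ℝ) 1
      rw [hm]
      constructor
      · linarith
      · linarith
    · have h3le : (3:ℝ) ≤ 3 * terRem r k := by
        have h3n : (3:ℕ) ≤ ⌊3 * terRem r k⌋₊ := hgt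
        calc (3:ℝ) = ((3:ℕ):ℝ) := by norm_num
          _ ≤ (⌊3 * terRem r k⌋₊ : ℝ) := by exact_mod_cast h3n
          _ ≤ 3 * terRem r k := hfl
      have hx1 : terRem r k = 1 := le_antisymm h1 (by linarith)
      have hm : min 2 ⌊3 * terRem r k⌋₊ = 2 := min_eq_left (by omega)
      show 3 * terRem r k - ((min 2 ⌊3 * terRem r k⌋₊ : ℕ) : ℝ) ∈ Set.Icc (0:ℝ) 1
      rw [hm, hx1]
      norm_num

lemma terSum {r : ℝ} (h : r ∈ Set.Icc (0:ℝ) 1) (n : ℕ) :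
    r = (∑ k ∈ Finset.range n, ((terDig r k : ℕ) : ℝ)/3^(k+1)) + terRem r n / 3^n := by
  induction n with
  | zero => simp [terRem]
  | succ n ih =>
    have hrec : terRem r (n+1) = 3 * terRem r n - ((terDig r n : ℕ) : ℝ) := rfl
    rw [Finset.sum_range_succ, hrec]
    conv_lhs => rw [ih]
    field_simp
    ring

lemma ternary_expansion {r : ℝ} (h : r ∈ Set.Icc (0:ℝ) 1) :
    (∀ k, (terDig r k : ℕ) ≤ 2) ∧ r = ∑' k, ((terDig r k : ℕ) : ℝ)/3^(k+1) := by
  refine ⟨fun k => min_le_left _ _, ?_⟩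
  have habs : ∀ k, |((terDig r k : ℕ) : ℝ)| ≤ 2 := by
    intro k
    rw [abs_of_nonneg (by positivity)]
    exact_mod_cast min_le_left _ _
  have hsum : Summable fun k => ((terDig r k : ℕ) : ℝ)/3^(k+1) :=
    summable_digits (by norm_num : (1:ℝ) < 3) habs
  have hb : ∀ n : ℕ, ‖(∑ k ∈ Finset.range n, ((terDig r k : ℕ) : ℝ)/3^(k+1)) - r‖ ≤ ((3:ℝ)^n)⁻¹ := by
    intro n
    have := terSum h n
    have hrem := terRem_mem h n
    have hpos : (0:ℝ) < 3^n := pow_pos (by norm_num) n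
    have h1 : 0 ≤ terRem r n / 3^n := div_nonneg hrem.1 hpos.le
    have h2 : terRem r n / 3^n ≤ ((3:ℝ)^n)⁻¹ := by
      rw [div_eq_mul_inv]
      calc terRem r n * ((3:ℝ)^n)⁻¹ ≤ 1 * ((3:ℝ)^n)⁻¹ :=
            mul_le_mul_of_nonneg_right hrem.2 (by positivity)
        _ = ((3:ℝ)^n)⁻¹ := one_mul _
    rw [Real.norm_eq_abs, abs_le]
    constructor
    · linarith
    · linarith
  have htend0 : Tendsto (fun n : ℕ => ((3:ℝ)^n)⁻¹) atTop (𝓝 0) :=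
    tendsto_inv_atTop_zero.comp (tendsto_pow_atTop_atTop_of_one_lt (by norm_num : (1:ℝ) < 3))
  have htend : Tendsto (fun n : ℕ => (∑ k ∈ Finset.range n, ((terDig r k : ℕ) : ℝ)/3^(k+1)) - r)
      atTop (𝓝 0) := squeeze_zero_norm hb htend0
  have htend2 : Tendsto (fun n : ℕ => ∑ k ∈ Finset.range n, ((terDig r k : ℕ) : ℝ)/3^(k+1))
      atTop (𝓝 r) := by
    have := htend.add_const r
    simpa using this
  exact tendsto_nhds_unique htend2 hsum.hasSum.tendsto_sum_nat


def gdig : ℝ × ℝ → ℝ := fun a => 2*a.1 + a.2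

def ginv : ℕ → ℝ × ℝ := fun v => if v = 0 then (0,0) else if v = 1 then (0,1) else (1,0)

lemma gdig_cases {a : ℝ × ℝ} (h : a ∈ Omega1) : gdig a = 0 ∨ gdig a = 1 ∨ gdig a = 2 := by
  rcases mem_Omega1_cases h with rfl|rfl|rfl <;> norm_num [gdig]

lemma gdig_abs {a : ℝ × ℝ} (h : a ∈ Omega1) : |gdig a| ≤ 2 := by
  rcases gdig_cases h with h'|h'|h' <;> rw [h'] <;> norm_num

lemma gdig_ginv {v : ℕ} (h : v ≤ 2) : gdig (ginv v) = v := by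
  interval_cases v <;> norm_num [gdig, ginv]

lemma ginv_mem_AF (v : ℕ) : ginv v ∈ AF ((0:ℝ),(0:ℝ)) := by
  rw [ginv, AF, if_pos rfl]
  split_ifs <;> simp

lemma forced_mem_AF {w : ℝ × ℝ} (hw : w ∈ Omega2) : forced w ∈ AF w := by
  rcases mem_Omega2_cases hw with rfl|rfl|rfl|rfl|rfl|rfl|rfl <;>
    norm_num [AF, forced, Prod.ext_iff]

open scoped Classical in
noncomputable def phiM (q : ℝ) (ts : ℕ → ℝ × ℝ) (x : ℝ × ℝ) : ℝ :=
  if hx : x ∈ moran q ts then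
    ∑' k, gdig ((Classical.choose hx) (Nat.nth (fun i => ts i = ((0:ℝ),(0:ℝ))) k)) / 3^(k+1)
  else 0

lemma phiM_eq {q : ℝ} (hq2 : 2 < q) {ts : ℕ → ℝ × ℝ} (hts : ∀ i, ts i ∈ Omega2)
    {c : ℕ → ℝ × ℝ} (hc : ∀ i, c i ∈ AF (ts i)) :
    phiM q ts (piQ q c)
      = ∑' k, gdig (c (Nat.nth (fun i => ts i = ((0:ℝ),(0:ℝ))) k)) / 3^(k+1) := by
  have hx : piQ q c ∈ moran q ts := ⟨c, hc, rfl⟩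
  rw [phiM, dif_pos hx]
  obtain ⟨hc', hx'⟩ := Classical.choose_spec hx
  have hcc : Classical.choose hx = c :=
    piQ_inj hq2 (fun i => AF_mem_Omega1 (hts i) (hc' i))
      (fun i => AF_mem_Omega1 (hts i) (hc i)) hx'.symm
  rw [hcc]

lemma cnt_eq_count {ts : ℕ → ℝ × ℝ} (n : ℕ) :
    cnt ts n = Nat.count (fun i => ts i = ((0:ℝ),(0:ℝ))) n := by
  classical
  rw [Nat.count_eq_card_filter_range, cnt]


lemma dimH_moran_ge {q : ℝ} (hq2 : 2 < q) {ts : ℕ → ℝ × ℝ} (hts : ∀ i, ts i ∈ Omega2) :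
    ENNReal.ofReal (Real.log 3 / Real.log q *
      liminf (fun n : ℕ => ((cnt ts n : ℝ))/n) atTop) ≤ dimH (moran q ts) := by
  classical
  have hq1 : (1:ℝ) < q := by linarith
  have hq0 : (0:ℝ) < q := by linarith
  have hlogq : 0 < Real.log q := Real.log_pos hq1
  have hlog3 : 0 < Real.log 3 := Real.log_pos (by norm_num)
  set p : ℕ → Prop := fun i => ts i = ((0:ℝ),(0:ℝ)) with hpdef
  set L : ℝ := liminf (fun n : ℕ => ((cnt ts n : ℝ))/n) atTop with hLdef
  have hlb : ∀ n : ℕ, (0:ℝ) ≤ ((cnt ts n : ℝ))/n := fun n => by positivity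
  have hbddB : IsBoundedUnder (· ≥ ·) atTop (fun n : ℕ => ((cnt ts n : ℝ))/n) :=
    ⟨0, Filter.eventually_map.2 (Filter.Eventually.of_forall hlb)⟩
  refine ENNReal.le_of_forall_nnreal_lt fun rr hrr => ?_
  rcases eq_or_ne rr 0 with rfl|hrr0
  · simp
  have hrrpos : (0:ℝ) < rr := by exact_mod_cast pos_iff_ne_zero.2 hrr0
  have hlt : (rr:ℝ) < Real.log 3 / Real.log q * L := by
    have := (ENNReal.lt_ofReal_iff_toReal_lt (by simp : (rr:ℝ≥0∞) ≠ ⊤)).1 hrr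
    simpa using this
  have hrlq : (rr:ℝ) * Real.log q < L * Real.log 3 := by
    have h' := mul_lt_mul_of_pos_right hlt hlogq
    calc (rr:ℝ) * Real.log q < Real.log 3 / Real.log q * L * Real.log q := h'
      _ = L * Real.log 3 := by field_simp
  have hL0 : 0 < L := by nlinarith
  -- the zero set is infinite
  have hinf : (setOf p).Infinite := by
    by_contra hninf
    rw [Set.not_infinite] at hninf
    set N : ℕ := hninf.toFinset.card with hNdef
    have hcntN : ∀ n, cnt ts n ≤ N := by
      intro n
      apply Finset.card_le_card
      intro i hi
      rw [Set.Finite.mem_toFinset]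
      exact (Finset.mem_filter.1 hi).2
    have hev1 : ∀ᶠ n : ℕ in atTop, L/2 < (cnt ts n : ℝ)/n :=
      eventually_lt_of_lt_liminf (by linarith) hbddB
    have hev2 : ∀ᶠ n : ℕ in atTop, (N:ℝ)/n < L/2 :=
      (tendsto_const_div_atTop_nhds_zero_nat (N:ℝ)).eventually_lt_const (by linarith)
    have hev3 : ∀ᶠ n : ℕ in atTop, 1 ≤ n := Filter.eventually_ge_atTop 1
    obtain ⟨n, h1, h2, h3⟩ := (hev1.and (hev2.and hev3)).exists
    have hnpos : (0:ℝ) < n := by exact_mod_cast h3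
    have h4 : (cnt ts n : ℝ)/n ≤ (N:ℝ)/n := by
      gcongr
      exact_mod_cast hcntN n
    linarith
  -- Hölder exponent setup
  set ε : ℝ := (L * Real.log 3 - (rr:ℝ) * Real.log q)/(2 * Real.log 3) with hεdef
  have hε : 0 < ε := div_pos (by linarith) (by linarith)
  have hεlog : ε * Real.log 3 = (L * Real.log 3 - (rr:ℝ) * Real.log q)/2 := by
    rw [hεdef, div_mul_eq_mul_div, mul_comm (2:ℝ) (Real.log 3), ← div_div,
      mul_div_assoc, div_self hlog3.ne', mul_one]
  have hLε : (rr:ℝ) * Real.log q ≤ (L - ε) * Real.log 3 := by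
    have he : (L-ε)*Real.log 3 = L * Real.log 3 - ε * Real.log 3 := by ring
    rw [he, hεlog]
    linarith
  have hev : ∀ᶠ n : ℕ in atTop, L - ε < (cnt ts n : ℝ)/n :=
    eventually_lt_of_lt_liminf (by linarith) hbddB
  obtain ⟨N, hN⟩ := Filter.eventually_atTop.1 hev
  set γ : ℝ := (q-2)/(q-1) with hγdef
  have hγ0 : 0 < γ := div_pos (by linarith) (by linarith)
  set C0 : ℝ := Real.exp ((rr:ℝ) * (((N:ℝ)+1) * Real.log q - Real.log γ)) with hC0def
  have hC0pos : 0 < C0 := Real.exp_pos _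
  have hkey : ∀ m : ℕ, (((3:ℝ)^(cnt ts m))⁻¹ : ℝ) ≤ C0 * (γ * (q^(m+1))⁻¹)^(rr:ℝ) := by
    intro m
    have hbase : (0:ℝ) < γ * (q^(m+1))⁻¹ := by positivity
    have e1 : (γ * (q^(m+1))⁻¹)^(rr:ℝ)
        = Real.exp ((Real.log γ - ((m:ℝ)+1) * Real.log q) * (rr:ℝ)) := by
      rw [Real.rpow_def_of_pos hbase]
      congr 2
      rw [Real.log_mul hγ0.ne' (by positivity), Real.log_inv, Real.log_pow]
      push_cast
      ring
    have e2 : ((3:ℝ)^(cnt ts m))⁻¹ = Real.exp (-((cnt ts m : ℝ) * Real.log 3)) := by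
      rw [Real.exp_neg]
      congr 1
      rw [Real.exp_nat_mul, Real.exp_log (by norm_num : (0:ℝ) < 3)]
    rw [e1, e2, hC0def, ← Real.exp_add]
    apply Real.exp_le_exp.2
    have hsimp : (rr:ℝ) * (((N:ℝ)+1) * Real.log q - Real.log γ)
        + (Real.log γ - ((m:ℝ)+1) * Real.log q) * (rr:ℝ)
        = (rr:ℝ) * Real.log q * ((N:ℝ) - (m:ℝ)) := by ring
    rw [hsimp]
    rcases le_or_gt m N with hmN|hmN
    · have hmn' : (m:ℝ) ≤ N := by exact_mod_cast hmN
      have h1 : (0:ℝ) ≤ (rr:ℝ) * Real.log q * ((N:ℝ) - m) := by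
        apply mul_nonneg (by positivity)
        linarith
      have h2 : -((cnt ts m : ℝ) * Real.log 3) ≤ 0 := by
        apply neg_nonpos.2
        positivity
      linarith
    · have hm1 : 1 ≤ m := by omega
      have hmpos : (0:ℝ) < m := by exact_mod_cast hm1
      have hcnt : (L - ε) * m ≤ (cnt ts m : ℝ) := by
        have h' := hN m (by omega)
        rw [lt_div_iff₀ hmpos] at h'
        linarith
      have h3 : (rr:ℝ) * Real.log q * ((m:ℝ) - N) ≤ (rr:ℝ) * Real.log q * m := by
        apply mul_le_mul_of_nonneg_left _ (by positivity)
        have hn0 : (0:ℝ) ≤ N := by positivity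
        linarith
      have h4 : (rr:ℝ) * Real.log q * m ≤ (L - ε) * Real.log 3 * m :=
        mul_le_mul_of_nonneg_right hLε hmpos.le
      have h5 : (L - ε) * Real.log 3 * m ≤ (cnt ts m : ℝ) * Real.log 3 := by
        calc (L - ε) * Real.log 3 * m = ((L - ε) * m) * Real.log 3 := by ring
          _ ≤ (cnt ts m : ℝ) * Real.log 3 := mul_le_mul_of_nonneg_right hcnt hlog3.le
      have h6 : (rr:ℝ) * Real.log q * ((N:ℝ) - m) = -((rr:ℝ) * Real.log q * ((m:ℝ) - N)) := by
        ring
      rw [h6]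
      linarith
  set C : ℝ≥0 := Real.toNNReal C0 with hCdef
  -- the Hölder estimate
  have hHolder : HolderOnWith C rr (phiM q ts) (moran q ts) := by
    intro x hx y hy
    rcases eq_or_ne x y with rfl|hxy
    · simp
    obtain ⟨cx, hcx, hxe⟩ := hx
    obtain ⟨cy, hcy, hye⟩ := hy
    have hcxO : ∀ i, cx i ∈ Omega1 := fun i => AF_mem_Omega1 (hts i) (hcx i)
    have hcyO : ∀ i, cy i ∈ Omega1 := fun i => AF_mem_Omega1 (hts i) (hcy i)
    have hne : cx ≠ cy := by
      rintro rfl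
      exact hxy (hxe.trans hye.symm)
    have hexm : ∃ i, cx i ≠ cy i := Function.ne_iff.1 hne
    set m : ℕ := Nat.find hexm with hmdef
    have hzm : ∀ i < m, cx i = cy i := fun i hi => not_not.1 (Nat.find_min hexm hi)
    have hdistlow : γ * (q^(m+1))⁻¹ ≤ dist x y := by
      have := dist_piQ_lower hq2 hcxO hcyO hzm (Nat.find_spec hexm)
      rw [hxe, hye]
      calc γ * (q^(m+1))⁻¹ = (q-2)/((q-1)*q^(m+1)) := by
            rw [hγdef, division_def, division_def, mul_assoc, ← mul_inv]
        _ ≤ dist (piQ q cx) (piQ q cy) := this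
    -- φ difference bound
    set κ : ℕ := cnt ts m with hκdef
    have hcntm : Nat.count p m = κ := by rw [hκdef, cnt_eq_count]
    set u : ℕ → ℝ := fun k => gdig (cx (Nat.nth p k)) with hudef
    set v : ℕ → ℝ := fun k => gdig (cy (Nat.nth p k)) with hvdef
    have hu2 : ∀ k, |u k| ≤ 2 := fun k => gdig_abs (hcxO _)
    have hv2 : ∀ k, |v k| ≤ 2 := fun k => gdig_abs (hcyO _)
    have huv2 : ∀ k, |u k - v k| ≤ 2 := by
      intro k
      have h1 := gdig_cases (hcxO (Nat.nth p k))
      have h2 := gdig_cases (hcyO (Nat.nth p k))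
      rw [hudef, hvdef]
      simp only
      rcases h1 with h1|h1|h1 <;> rcases h2 with h2|h2|h2 <;> rw [h1, h2] <;> norm_num
    have huvz : ∀ k < κ, u k - v k = 0 := by
      intro k hk
      have : Nat.nth p k < m := Nat.nth_lt_of_lt_count (by rw [hcntm]; exact hk)
      rw [hudef, hvdef]
      simp only
      rw [hzm _ this]
      ring
    have hφx : phiM q ts x = ∑' k, u k / 3^(k+1) := by
      rw [hxe, phiM_eq hq2 hts hcx]
    have hφy : phiM q ts y = ∑' k, v k / 3^(k+1) := by
      rw [hye, phiM_eq hq2 hts hcy]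
    have hsub : phiM q ts x - phiM q ts y = ∑' k, (u k - v k) / 3^(k+1) := by
      rw [hφx, hφy, ← Summable.tsum_sub (summable_digits (by norm_num : (1:ℝ) < 3) hu2)
        (summable_digits (by norm_num : (1:ℝ) < 3) hv2)]
      exact tsum_congr fun k => (sub_div _ _ _).symm
    have hφbound : |phiM q ts x - phiM q ts y| ≤ ((3:ℝ)^κ)⁻¹ := by
      rw [hsub, tsum_shift (by norm_num : (1:ℝ) < 3) huv2 κ,
        Finset.sum_eq_zero (fun k hk => by
          rw [huvz k (Finset.mem_range.1 hk)]; simp), zero_add, abs_mul, abs_inv, abs_pow]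
      have habs := abs_tsum_le (by norm_num : (1:ℝ) < 3) (fun k => huv2 (k + κ))
      have : |(3:ℝ)| = 3 := by norm_num
      rw [this]
      calc ((3:ℝ)^κ)⁻¹ * |∑' k, (u (k+κ) - v (k+κ)) / 3^(k+1)|
          ≤ ((3:ℝ)^κ)⁻¹ * (2 * (3-1)⁻¹) :=
            mul_le_mul_of_nonneg_left habs (by positivity)
        _ = ((3:ℝ)^κ)⁻¹ := by norm_num
    -- final combination
    rw [edist_dist, edist_dist, Real.dist_eq]
    have hdxy : 0 < dist x y := dist_pos.2 hxy
    have hrw : ENNReal.ofReal (dist x y) ^ (rr:ℝ) = ENNReal.ofReal (dist x y ^ (rr:ℝ)) :=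
      ENNReal.ofReal_rpow_of_pos hdxy
    rw [hrw]
    have hC0coe : (C:ℝ≥0∞) = ENNReal.ofReal C0 := by
      rw [hCdef, ENNReal.ofReal]
    rw [hC0coe, ← ENNReal.ofReal_mul hC0pos.le]
    apply ENNReal.ofReal_le_ofReal
    calc |phiM q ts x - phiM q ts y| ≤ ((3:ℝ)^κ)⁻¹ := hφbound
      _ ≤ C0 * (γ * (q^(m+1))⁻¹)^(rr:ℝ) := hkey m
      _ ≤ C0 * dist x y ^ (rr:ℝ) := by
          apply mul_le_mul_of_nonneg_left _ hC0pos.le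
          exact Real.rpow_le_rpow (by positivity) hdistlow hrrpos.le
  -- surjectivity onto [0,1]
  have hsurj : Set.Icc (0:ℝ) 1 ⊆ phiM q ts '' (moran q ts) := by
    intro ρ hρ
    obtain ⟨hd2, hdsum⟩ := ternary_expansion hρ
    set c : ℕ → ℝ × ℝ := fun i => if p i then ginv (terDig ρ (Nat.count p i)) else forced (ts i)
      with hcdef
    have hc : ∀ i, c i ∈ AF (ts i) := by
      intro i
      rw [hcdef]
      simp only
      by_cases hpi : p i
      · rw [if_pos hpi, hpi]
        exact ginv_mem_AF _
      · rw [if_neg hpi]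
        exact forced_mem_AF (hts i)
    refine ⟨piQ q c, ⟨c, hc, rfl⟩, ?_⟩
    rw [phiM_eq hq2 hts hc]
    have hterm : ∀ k, gdig (c (Nat.nth p k)) = ((terDig ρ k : ℕ) : ℝ) := by
      intro k
      have hpk : p (Nat.nth p k) := Nat.nth_mem_of_infinite hinf k
      rw [hcdef]
      simp only
      rw [if_pos hpk, Nat.count_nth_of_infinite hinf, gdig_ginv (hd2 k)]
    calc (∑' k, gdig (c (Nat.nth p k)) / 3^(k+1))
        = ∑' k, ((terDig ρ k : ℕ) : ℝ)/3^(k+1) :=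
          tsum_congr fun k => by rw [hterm k]
      _ = ρ := hdsum.symm
  -- conclude
  have hrrpos' : (0:ℝ≥0) < rr := pos_iff_ne_zero.2 hrr0
  have himg := hHolder.dimH_image_le hrrpos'
  have hdim1 : dimH (Set.Icc (0:ℝ) 1) = 1 := by
    rw [Real.dimH_of_mem_nhds
      (Icc_mem_nhds (by norm_num) (by norm_num) : Set.Icc (0:ℝ) 1 ∈ 𝓝 (1/2 : ℝ))]
    simp
  have hone : (1:ℝ≥0∞) ≤ dimH (moran q ts) / (rr : ℝ≥0∞) := by
    calc (1:ℝ≥0∞) = dimH (Set.Icc (0:ℝ) 1) := hdim1.symm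
      _ ≤ dimH (phiM q ts '' (moran q ts)) := dimH_mono hsurj
      _ ≤ dimH (moran q ts) / (rr : ℝ≥0∞) := himg
  have hfin := (ENNReal.le_div_iff_mul_le
    (Or.inl (by exact_mod_cast hrr0)) (Or.inl (by simp))).1 hone
  simpa using hfin

end SGAux

theorem stmt3 (q : ℝ) (hq : q ∈ Set.Ioo (2 : ℝ) 3) (t : ℝ × ℝ) (ht : t ∈ Tset q)
    (ts : ℕ → ℝ × ℝ) (hts : ∀ i, ts i ∈ Omega2)
    (hexp : t = ∑' i, (q ^ (i + 1))⁻¹ • ts i) :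
    dimH (gasket q ∩ ((· + t) '' gasket q)) =
      ENNReal.ofReal (Real.log 3 / Real.log q *
        Filter.liminf (fun n : ℕ =>
          (((Finset.range n).filter fun i => ts i = ((0 : ℝ), (0 : ℝ))).card : ℝ) / n)
          Filter.atTop) := by
  obtain ⟨hq2, hq3⟩ := hq
  obtain ⟨htE, ht1, ht2⟩ := ht
  have hdesc : gasket q ∩ ((· + t) '' gasket q) = SGAux.moran q ts :=
    SGAux.inter_desc hq2 hts hexp ht1 ht2
  rw [hdesc]
  have hcnt : (fun n : ℕ =>
      (((Finset.range n).filter fun i => ts i = ((0 : ℝ), (0 : ℝ))).card : ℝ) / n)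
      = fun n : ℕ => ((SGAux.cnt ts n : ℝ))/n := rfl
  rw [hcnt]
  exact le_antisymm (SGAux.dimH_moran_le hq2 hts) (SGAux.dimH_moran_ge hq2 hts)

end
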